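/- arXiv:1303.1598 — 5 statements merged into one kernel-verified Lean document; each statement's English description precedes it below -/
import Mathlib

section
/- Let f be a real-valued convex function on real symmetric n×n matrices, A₁,…,A_m symmetric matrices, x₀ ∈ ℝⁿ, X₀ = x₀x₀ᵀ, bᵢ = ⟨X₀, Aᵢ⟩, and suppose X₀ minimizes f over the feasible set {X ⪰ 0, ⟨X, Aᵢ⟩ = bᵢ ∀i}. If there is no nonzero matrix A in the span of {A₁,…,A_m} with A ⪰ 0 and ⟨A, X₀⟩ = 0, then there exists a dual certificate at X₀: there exist λ ∈ ℝ^m and a symmetric Q with Q ⪯ 0, ⟨Q, X₀⟩ = 0, and f(X) ≥ f(X₀) − ⟨Σᵢ λᵢAᵢ + Q, X − X₀⟩ for all symmetric X. -/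
open Matrix
open scoped RealInnerProductSpace

attribute [local instance] Matrix.normedAddCommGroup Matrix.normedSpace

section Helpers
variable {n m : ℕ}

private theorem sep_inner {E : Type*} [NormedAddCommGroup E] [InnerProductSpace ℝ E]
    [FiniteDimensional ℝ E] [Nontrivial E] {D : Set E} (hD : Convex ℝ D)
    (h0 : (0:E) ∉ D) : ∃ u : E, u ≠ 0 ∧ ∀ x ∈ D, ⟪u, x⟫ ≤ 0 := by
  have hsph : IsCompact (Metric.sphere (0:E) 1) := isCompact_sphere _ _
  have hsne : (Metric.sphere (0:E) 1).Nonempty := NormedSpace.sphere_nonempty.mpr zero_le_one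
  have key : (Metric.sphere (0:E) 1 ∩ ⋂ x : D, {u : E | ⟪u, (x:E)⟫ ≤ 0}).Nonempty := by
    apply hsph.inter_iInter_nonempty
    · intro x
      exact isClosed_le (continuous_id.inner continuous_const) continuous_const
    · intro F
      rcases F.eq_empty_or_nonempty with rfl | ⟨x₁, hx₁⟩
      · simpa using hsne
      set s0 : Set E := (fun i : D => (i:E)) '' (↑F : Set D) with hs0
      have hs0fin : s0.Finite := F.finite_toSet.image _
      have hhull_sub : convexHull ℝ s0 ⊆ D := by
        apply convexHull_min _ hD
        intro y hy
        obtain ⟨i, _, rfl⟩ := hy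
        exact i.2
      obtain ⟨g, u, v, hg0, huv, hgt⟩ :=
        geometric_hahn_banach_compact_closed (convex_singleton (0:E)) isCompact_singleton
          (convex_convexHull ℝ s0) (hs0fin.isCompact_convexHull (𝕜 := ℝ)).isClosed
          (Set.disjoint_singleton_left.mpr (fun h => h0 (hhull_sub h)))
      have hgpos : ∀ y ∈ convexHull ℝ s0, 0 < g y := by
        intro y hy
        have h1 : g 0 < u := hg0 0 rfl
        have := hgt y hy
        simp only [map_zero] at h1
        linarith
      set w : E := (InnerProductSpace.toDual ℝ E).symm g with hw
      have hwin : ∀ y : E, ⟪w, y⟫ = g y := fun y => InnerProductSpace.toDual_symm_apply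
      have hx₁mem : (x₁ : E) ∈ convexHull ℝ s0 := by
        exact subset_convexHull ℝ s0 ⟨x₁, hx₁, rfl⟩
      have hwne : w ≠ 0 := by
        intro h
        have := hgpos _ hx₁mem
        rw [← hwin, h, inner_zero_left] at this
        exact lt_irrefl _ this
      refine ⟨-(‖w‖⁻¹ • w), ?_, ?_⟩
      · simp only [Metric.mem_sphere, dist_zero_right, norm_neg, norm_smul, norm_inv, norm_norm]
        exact inv_mul_cancel₀ (norm_ne_zero_iff.mpr hwne)
      · simp only [Set.mem_iInter]
        intro x hxF
        have hxmem : (x : E) ∈ convexHull ℝ s0 := subset_convexHull ℝ s0 ⟨x, hxF, rfl⟩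
        have := hgpos _ hxmem
        rw [← hwin] at this
        simp only [Set.mem_setOf_eq, inner_neg_left, inner_smul_left, RCLike.ofReal_real_eq_id,
          id_eq, neg_nonpos]
        exact mul_nonneg (inv_nonneg.mpr (norm_nonneg w)) this.le
  obtain ⟨u, husph, hu⟩ := key
  refine ⟨u, ?_, ?_⟩
  · intro h
    rw [h] at husph
    simp at husph
  · intro x hx
    have := Set.mem_iInter.mp hu ⟨x, hx⟩
    exact this

private theorem sep_lin {E : Type*} [NormedAddCommGroup E] [NormedSpace ℝ E]
    [FiniteDimensional ℝ E] [Nontrivial E] {D : Set E} (hD : Convex ℝ D)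
    (h0 : (0:E) ∉ D) : ∃ g : E →ₗ[ℝ] ℝ, g ≠ 0 ∧ ∀ x ∈ D, g x ≤ 0 := by
  haveI : Nontrivial (EuclideanSpace ℝ (Fin (Module.finrank ℝ E))) :=
    (toEuclidean (E := E)).toEquiv.symm.nontrivial
  have hD' : Convex ℝ (toEuclidean (E := E) '' D) :=
    hD.linear_image toEuclidean.toLinearEquiv.toLinearMap
  have h0' : (0 : EuclideanSpace ℝ (Fin (Module.finrank ℝ E))) ∉ toEuclidean (E := E) '' D := by
    rintro ⟨x, hx, hx0⟩
    have : x = 0 := by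
      have := toEuclidean (E := E) |>.injective
      apply this
      rw [hx0, map_zero]
    exact h0 (this ▸ hx)
  obtain ⟨u, hu, hle⟩ := sep_inner hD' h0'
  refine ⟨{ toFun := fun x => ⟪u, toEuclidean (E := E) x⟫,
            map_add' := fun x y => by simp [inner_add_right],
            map_smul' := fun c x => by simp [inner_smul_right] }, ?_, ?_⟩
  · intro h
    have h2 := DFunLike.congr_fun h ((toEuclidean (E := E)).symm u)
    simp only [LinearMap.coe_mk, AddHom.coe_mk, LinearMap.zero_apply,
      ContinuousLinearEquiv.apply_symm_apply] at h2
    rw [real_inner_self_eq_norm_sq] at h2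
    have := norm_eq_zero.mp (by nlinarith [norm_nonneg u] : ‖u‖ = 0)
    exact hu this
  · intro x hx
    exact hle _ ⟨x, hx, rfl⟩



private theorem psd_isSymm {M : Matrix (Fin n) (Fin n) ℝ} (h : M.PosSemidef) : M.IsSymm := by
  have := h.1
  rwa [Matrix.IsHermitian, conjTranspose_eq_transpose_of_trivial] at this

private theorem psd_of_symm_quad {M : Matrix (Fin n) (Fin n) ℝ} (h1 : M.IsSymm)
    (h2 : ∀ v : Fin n → ℝ, 0 ≤ dotProduct v (M *ᵥ v)) : M.PosSemidef := by
  refine Matrix.PosSemidef.of_dotProduct_mulVec_nonneg ?_ ?_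
  · rwa [Matrix.IsHermitian, conjTranspose_eq_transpose_of_trivial]
  · intro x
    simpa using h2 x

private theorem psd_quad {M : Matrix (Fin n) (Fin n) ℝ} (h : M.PosSemidef)
    (v : Fin n → ℝ) : 0 ≤ dotProduct v (M *ᵥ v) := by simpa using h.dotProduct_mulVec_nonneg v

private theorem psd_add {M N : Matrix (Fin n) (Fin n) ℝ} (hM : M.PosSemidef)
    (hN : N.PosSemidef) : (M + N).PosSemidef := by
  refine psd_of_symm_quad ((psd_isSymm hM).add (psd_isSymm hN)) fun v => ?_
  rw [add_mulVec, dotProduct_add]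
  exact add_nonneg (psd_quad hM v) (psd_quad hN v)

private theorem psd_smul {M : Matrix (Fin n) (Fin n) ℝ} {c : ℝ} (hM : M.PosSemidef)
    (hc : 0 ≤ c) : (c • M).PosSemidef := by
  refine psd_of_symm_quad ((psd_isSymm hM).smul c) fun v => ?_
  rw [smul_mulVec, dotProduct_smul]
  exact mul_nonneg hc (psd_quad hM v)

private theorem psd_vecMulVec (x : Fin n → ℝ) : (vecMulVec x x).PosSemidef := by
  refine psd_of_symm_quad ?_ fun v => ?_
  · ext i j; simp [Matrix.transpose_apply, vecMulVec_apply, mul_comm]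
  · have : dotProduct v (vecMulVec x x *ᵥ v) = (dotProduct x v) * (dotProduct x v) := by
      simp only [dotProduct, mulVec, vecMulVec_apply, Finset.sum_mul, Finset.mul_sum]
      rw [Finset.sum_comm]
      apply Finset.sum_congr rfl; intro i _
      apply Finset.sum_congr rfl; intro j _
      ring
    rw [this]
    exact mul_self_nonneg _



private theorem trace_mul_vecMulVec (M : Matrix (Fin n) (Fin n) ℝ) (v : Fin n → ℝ) :
    (M * vecMulVec v v).trace = dotProduct v (M *ᵥ v) := by
  simp only [Matrix.trace, Matrix.diag, Matrix.mul_apply, vecMulVec_apply, dotProduct, mulVec,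
    Finset.mul_sum]
  apply Finset.sum_congr rfl; intro i _
  apply Finset.sum_congr rfl; intro j _
  ring

private theorem trace_rep (ℓ : Matrix (Fin n) (Fin n) ℝ →ₗ[ℝ] ℝ) (M : Matrix (Fin n) (Fin n) ℝ) :
    ((Matrix.of fun i j => ℓ (Matrix.single j i 1)) * M).trace = ℓ M := by
  conv_rhs => rw [matrix_eq_sum_single M]
  rw [map_sum]
  simp only [Matrix.trace, Matrix.diag, Matrix.mul_apply, Matrix.of_apply]
  rw [Finset.sum_comm]
  apply Finset.sum_congr rfl; intro i _
  rw [map_sum]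
  apply Finset.sum_congr rfl; intro j _
  have : Matrix.single i j (M i j) = (M i j) • Matrix.single i j 1 := by
    rw [Matrix.smul_single, smul_eq_mul, mul_one]
  rw [this, _root_.map_smul, smul_eq_mul]
  ring

private theorem isSymm_sum (d : Fin m → ℝ) (A : Fin m → Matrix (Fin n) (Fin n) ℝ)
    (hA : ∀ i, (A i).IsSymm) : (∑ i, d i • A i).IsSymm := by
  unfold Matrix.IsSymm
  rw [Matrix.transpose_sum]
  apply Finset.sum_congr rfl
  intro i _
  rw [Matrix.transpose_smul, (hA i)]

private theorem eq_zero_of_mul_le {a : ℝ} (K : ℝ) (h : ∀ t : ℝ, t * a ≤ K) : a = 0 := by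
  by_contra ha
  have h1 := h ((|K| + 1) / a)
  rw [div_mul_cancel₀ _ ha] at h1
  have := le_abs_self K
  linarith

private theorem nonpos_of_le_mul {a K : ℝ} (hK : 0 ≤ K) (h : ∀ ε : ℝ, 0 < ε → a ≤ K * ε) :
    a ≤ 0 := by
  by_contra h'
  push_neg at h'
  have hden : (0:ℝ) < 2 * K + 2 := by linarith
  have h1 := h (a / (2 * K + 2)) (by positivity)

  have e : a / (2 * K + 2) * (2 * K + 2) = a := div_mul_cancel₀ _ (ne_of_gt hden)
  have h2 : a * (2 * K + 2) ≤ K * (a / (2 * K + 2)) * (2 * K + 2) :=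
    mul_le_mul_of_nonneg_right h1 hden.le
  rw [mul_assoc, e] at h2
  nlinarith [mul_nonneg hK h'.le]

private theorem pi_decomp (y : Fin m → ℝ) : y = ∑ i, y i • (Pi.single i 1 : Fin m → ℝ) := by
  ext j
  simp [Finset.sum_apply, Pi.single_apply]
  -- variables
end Helpers

set_option maxHeartbeats 1000000 in
/-- **Theorem 3.** If `X₀ = x₀x₀ᵀ` minimizes the problem and no nonzero matrix in the
span of the measurement matrices is positive semidefinite and orthogonal to `X₀`,
then a dual certificate exists at `X₀`. -/
theorem dual_certificate_exists_of_no_orthogonal_psd {n m : ℕ}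
    (f : Matrix (Fin n) (Fin n) ℝ → ℝ)
    (A : Fin m → Matrix (Fin n) (Fin n) ℝ)
    (x₀ : Fin n → ℝ) (X₀ : Matrix (Fin n) (Fin n) ℝ) (b : Fin m → ℝ)
    (hX₀ : X₀ = vecMulVec x₀ x₀)
    (hb : ∀ i, b i = (X₀ * A i).trace)
    (hf : ConvexOn ℝ {X : Matrix (Fin n) (Fin n) ℝ | X.IsSymm} f)
    (hA : ∀ i, (A i).IsSymm)
    (hmin : ∀ X : Matrix (Fin n) (Fin n) ℝ, X.PosSemidef →
      (∀ i, (X * A i).trace = b i) → f X₀ ≤ f X)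
    (hspan : ¬ ∃ B : Matrix (Fin n) (Fin n) ℝ,
      B ∈ Submodule.span ℝ (Set.range A) ∧ B ≠ 0 ∧ B.PosSemidef ∧
        (B * X₀).trace = 0) :
    ∃ (lam : Fin m → ℝ) (Q : Matrix (Fin n) (Fin n) ℝ),
      (-Q).PosSemidef ∧ (Q * X₀).trace = 0 ∧
      ∀ X : Matrix (Fin n) (Fin n) ℝ, X.IsSymm →
        f X ≥ f X₀ - (((∑ i, lam i • A i) + Q) * (X - X₀)).trace := by
  classical
  have hX₀psd : X₀.PosSemidef := hX₀ ▸ psd_vecMulVec x₀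
  have hX₀symm : X₀.IsSymm := psd_isSymm hX₀psd
  -- the measurement linear map
  set TT : Matrix (Fin n) (Fin n) ℝ →ₗ[ℝ] (Fin m → ℝ) :=
    { toFun := fun X => fun i => (X * A i).trace
      map_add' := fun X Y => by funext i; simp [Matrix.add_mul, trace_add]
      map_smul' := fun c X => by funext i; simp [Matrix.smul_mul, trace_smul] } with hTTdef
  have hTT : ∀ X i, TT X i = (X * A i).trace := fun X i => rfl
  -- ## Step A : existence of Lagrange multipliers for the affine constraints
  obtain ⟨lam, hlam⟩ : ∃ lam : Fin m → ℝ, ∀ X, X.PosSemidef →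
      f X₀ ≤ f X + ((∑ i, lam i • A i) * (X - X₀)).trace := by
    obtain ⟨W', hW'⟩ := (LinearMap.range TT).exists_isCompl
    haveI : Nontrivial ((Fin m → ℝ) × ℝ) := ⟨⟨(0, 0), (0, 1), by simp [Prod.ext_iff]⟩⟩
    set DA : Set ((Fin m → ℝ) × ℝ) :=
      {p | ∃ X w, X.PosSemidef ∧ w ∈ W' ∧ p.1 = TT X - TT X₀ + w ∧ f X - f X₀ < p.2} with hDAdef
    have hDAconv : Convex ℝ DA := by
      intro p hp q hq a c ha hc hac
      rcases eq_or_lt_of_le ha with rfl | ha'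
      · have : c = 1 := by linarith
        subst this
        simpa using hq
      rcases eq_or_lt_of_le hc with rfl | hc'
      · have : a = 1 := by linarith
        subst this
        simpa using hp
      obtain ⟨X₁, w₁, hX₁, hw₁, he₁, hr₁⟩ := hp
      obtain ⟨X₂, w₂, hX₂, hw₂, he₂, hr₂⟩ := hq
      refine ⟨a • X₁ + c • X₂, a • w₁ + c • w₂,
        psd_add (psd_smul hX₁ ha) (psd_smul hX₂ hc),
        W'.add_mem (W'.smul_mem _ hw₁) (W'.smul_mem _ hw₂), ?_, ?_⟩
      · show a • p.1 + c • q.1 = _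
        rw [he₁, he₂, map_add, _root_.map_smul, _root_.map_smul]
        rw [show c = 1 - a by linarith]
        module
      · show f _ - f X₀ < a * p.2 + c * q.2
        have hcomb := hf.2 (psd_isSymm hX₁ : X₁ ∈ {X : Matrix (Fin n) (Fin n) ℝ | X.IsSymm})
          (psd_isSymm hX₂) ha hc hac
        simp only [smul_eq_mul] at hcomb
        have hfx : a * f X₀ + c * f X₀ = f X₀ := by rw [← add_mul, hac, one_mul]
        have m1 := mul_lt_mul_of_pos_left hr₁ ha'
        have m2 := mul_lt_mul_of_pos_left hr₂ hc'
        linarith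
    have h0DA : (0 : (Fin m → ℝ) × ℝ) ∉ DA := by
      rintro ⟨X, w, hX, hw, he, hr⟩
      have hmem : TT X - TT X₀ ∈ LinearMap.range TT ⊓ W' := by
        constructor
        · exact ⟨X - X₀, by rw [map_sub]⟩
        · have : TT X - TT X₀ = -w := by
            have := he.symm
            simpa [eq_neg_iff_add_eq_zero] using this
          rw [this]; exact W'.neg_mem hw
      have hzero : TT X - TT X₀ = 0 := by
        rwa [hW'.inf_eq_bot, Submodule.mem_bot] at hmem
      have hfeas : ∀ i, (X * A i).trace = b i := by
        intro i
        have h1 := congrFun (sub_eq_zero.mp hzero) i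
        rw [hTT, hTT] at h1
        rw [h1, ← hb]
      have := hmin X hX hfeas
      simp only [Prod.snd_zero] at hr
      linarith
    obtain ⟨g, hg0, hgle⟩ := sep_lin hDAconv h0DA
    set μ : ℝ := g (0, 1) with hμdef
    set cfun : (Fin m → ℝ) →ₗ[ℝ] ℝ := g.comp (LinearMap.inl ℝ (Fin m → ℝ) ℝ) with hcfundef
    have hcfun : ∀ y, cfun y = g (y, 0) := fun y => rfl
    have hdec : ∀ y r, g (y, r) = cfun y + r * μ := by
      intro y r
      have h1 : (y, r) = (y, 0) + r • ((0 : Fin m → ℝ), (1 : ℝ)) := by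
        simp [Prod.ext_iff]
      rw [h1, map_add, _root_.map_smul, hcfun, smul_eq_mul, hμdef]
    have hineq : ∀ X w r, X.PosSemidef → w ∈ W' → f X - f X₀ < r →
        cfun (TT X - TT X₀ + w) + r * μ ≤ 0 := by
      intro X w r hX hw hr
      have := hgle (TT X - TT X₀ + w, r) ⟨X, w, hX, hw, rfl, hr⟩
      rwa [hdec] at this
    have hw0 : ∀ w ∈ W', cfun w = 0 := by
      intro w hw
      apply eq_zero_of_mul_le (-μ)
      intro t
      have h1 := hineq X₀ (t • w) 1 hX₀psd (W'.smul_mem _ hw) (by simp)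
      rw [sub_self, zero_add, _root_.map_smul, smul_eq_mul, one_mul] at h1
      linarith
    have hμ : μ ≤ 0 := by
      have h1 := hineq X₀ 0 1 hX₀psd W'.zero_mem (by simp)
      rw [sub_self, zero_add, map_zero, zero_add, one_mul] at h1
      exact h1
    have hmain : ∀ X, X.PosSemidef → cfun (TT X - TT X₀) + (f X - f X₀) * μ ≤ 0 := by
      intro X hX
      apply nonpos_of_le_mul (K := -μ) (by linarith)
      intro ε hε
      have h1 := hineq X 0 (f X - f X₀ + ε) hX W'.zero_mem (by linarith)
      rw [add_zero] at h1
      nlinarith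
    -- the matrix associated with the functional cfun
    set cB : Matrix (Fin n) (Fin n) ℝ := ∑ i, cfun (Pi.single i 1) • A i with hcBdef
    have hpair : ∀ Y, cfun (TT Y) = (cB * Y).trace := by
      intro Y
      conv_lhs => rw [pi_decomp (TT Y), map_sum]
      have h2 : cB * Y = ∑ i, cfun (Pi.single i 1) • (A i * Y) := by
        rw [hcBdef, Finset.sum_mul]
        exact Finset.sum_congr rfl fun i _ => smul_mul_assoc _ _ _
      rw [h2, trace_sum]
      apply Finset.sum_congr rfl
      intro i _
      rw [_root_.map_smul, trace_smul, smul_eq_mul, smul_eq_mul, hTT, trace_mul_comm]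
      ring
    by_cases hμ0 : μ = 0
    · exfalso
      have hle2 : ∀ X, X.PosSemidef → (cB * X).trace ≤ (cB * X₀).trace := by
        intro X hX
        have h1 := hmain X hX
        rw [hμ0, mul_zero, add_zero, map_sub, hpair, hpair] at h1
        linarith
      have htr0 : (cB * X₀).trace = 0 := by
        have h1 := hle2 0 Matrix.PosSemidef.zero
        rw [Matrix.mul_zero, trace_zero] at h1
        have h2 := hle2 ((2:ℝ) • X₀) (psd_smul hX₀psd (by norm_num))
        rw [Matrix.mul_smul, trace_smul, smul_eq_mul] at h2
        linarith
      have hBsum : -cB = ∑ i, (-(cfun (Pi.single i 1))) • A i := by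
        rw [hcBdef, ← Finset.sum_neg_distrib]
        exact Finset.sum_congr rfl fun i _ => (neg_smul _ _).symm
      have hBpsd : (-cB).PosSemidef := by
        refine psd_of_symm_quad (by rw [hBsum]; exact isSymm_sum _ _ hA) fun v => ?_
        rw [← trace_mul_vecMulVec]
        have h1 := hle2 (vecMulVec v v) (psd_vecMulVec v)
        rw [htr0] at h1
        rw [Matrix.neg_mul, trace_neg]
        linarith
      have hBne : -cB ≠ 0 := by
        intro hB
        have hcB0 : cB = 0 := by
          have := congrArg Neg.neg hB
          simpa using this
        apply hg0
        apply LinearMap.ext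
        rintro ⟨y, r⟩
        rw [hdec, hμ0, mul_zero, add_zero, LinearMap.zero_apply]
        have hy : y ∈ LinearMap.range TT ⊔ W' := by
          rw [hW'.sup_eq_top]; trivial
        obtain ⟨y₁, hy₁, y₂, hy₂, rfl⟩ := Submodule.mem_sup.mp hy
        obtain ⟨Y, rfl⟩ := hy₁
        rw [map_add, hpair, hcB0, Matrix.zero_mul, trace_zero, hw0 y₂ hy₂, add_zero]
      exact hspan ⟨-cB, by
          rw [hBsum]
          exact Submodule.sum_mem _ fun i _ =>
            Submodule.smul_mem _ _ (Submodule.subset_span ⟨i, rfl⟩),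
        hBne, hBpsd, by rw [Matrix.neg_mul, trace_neg, htr0, neg_zero]⟩
    · have hμneg : μ < 0 := lt_of_le_of_ne hμ hμ0
      refine ⟨fun i => cfun (Pi.single i 1) / μ, ?_⟩
      intro X hX
      have hsum : (∑ i, (cfun (Pi.single i 1) / μ) • A i) = μ⁻¹ • cB := by
        rw [hcBdef, Finset.smul_sum]
        apply Finset.sum_congr rfl
        intro i _
        rw [smul_smul, div_eq_inv_mul]
      rw [hsum, Matrix.smul_mul, trace_smul, smul_eq_mul]
      have h1 := hmain X hX
      set s : ℝ := cfun (TT X - TT X₀) with hsdef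
      have hs : s = (cB * (X - X₀)).trace := by
        rw [hsdef, ← map_sub TT X X₀, hpair]
      have h2 : s ≤ (f X₀ - f X) * μ := by linarith
      have h3 : μ⁻¹ * ((f X₀ - f X) * μ) ≤ μ⁻¹ * s :=
        mul_le_mul_of_nonpos_left h2 (inv_nonpos.mpr hμ)
      have h4 : μ⁻¹ * ((f X₀ - f X) * μ) = f X₀ - f X := by
        field_simp
      rw [← hs]
      linarith
  -- ## Step B : normal-cone / subgradient decomposition at X₀
  set G : Matrix (Fin n) (Fin n) ℝ := ∑ i, lam i • A i with hGdef
  set φ : Matrix (Fin n) (Fin n) ℝ → ℝ := fun X => f X + (G * (X - X₀)).trace with hφdef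
  have hφX₀ : φ X₀ = f X₀ := by
    simp only [hφdef, sub_self, Matrix.mul_zero, trace_zero, add_zero]
  have hφmin : ∀ Z, Z.PosSemidef → φ X₀ ≤ φ Z := by
    intro Z hZ
    rw [hφX₀]
    exact hlam Z hZ
  have hφconv : ∀ X Y : Matrix (Fin n) (Fin n) ℝ, X.IsSymm → Y.IsSymm →
      ∀ a c : ℝ, 0 ≤ a → 0 ≤ c → a + c = 1 → φ (a • X + c • Y) ≤ a * φ X + c * φ Y := by
    intro X Y hX hY a c ha hc hac
    have hff := hf.2 (hX : X ∈ {X : Matrix (Fin n) (Fin n) ℝ | X.IsSymm}) (hY : Y ∈ _) ha hc hac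
    simp only [smul_eq_mul] at hff
    have hlin : a • X + c • Y - X₀ = a • (X - X₀) + c • (Y - X₀) := by
      rw [show c = 1 - a by linarith]
      module
    have htr : (G * (a • X + c • Y - X₀)).trace
        = a * (G * (X - X₀)).trace + c * (G * (Y - X₀)).trace := by
      rw [hlin, Matrix.mul_add, trace_add, Matrix.mul_smul, Matrix.mul_smul,
        trace_smul, trace_smul, smul_eq_mul, smul_eq_mul]
    simp only [hφdef]
    rw [htr]
    ring_nf
    nlinarith [hff]
  -- the submodule of symmetric matrices and a complement
  set Msym : Submodule ℝ (Matrix (Fin n) (Fin n) ℝ) :=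
    { carrier := {X : Matrix (Fin n) (Fin n) ℝ | X.IsSymm}
      add_mem' := fun h1 h2 => h1.add h2
      zero_mem' := isSymm_zero
      smul_mem' := fun c {X} h => h.smul c } with hMsymdef
  have hMsymMem : ∀ X : Matrix (Fin n) (Fin n) ℝ, X ∈ Msym ↔ X.IsSymm := fun X => Iff.rfl
  obtain ⟨qc, hqc⟩ := Msym.exists_isCompl
  haveI : Nontrivial (Matrix (Fin n) (Fin n) ℝ × ℝ) := ⟨⟨(0, 0), (0, 1), by simp [Prod.ext_iff]⟩⟩
  set DB : Set (Matrix (Fin n) (Fin n) ℝ × ℝ) :=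
    {p | ∃ X Z w, X.IsSymm ∧ Z.PosSemidef ∧ w ∈ qc ∧ p.1 = X - Z + w ∧ φ X - φ X₀ < p.2}
    with hDBdef
  have hDBconv : Convex ℝ DB := by
    intro p hp q hq a c ha hc hac
    rcases eq_or_lt_of_le ha with rfl | ha'
    · have : c = 1 := by linarith
      subst this
      simpa using hq
    rcases eq_or_lt_of_le hc with rfl | hc'
    · have : a = 1 := by linarith
      subst this
      simpa using hp
    obtain ⟨X₁, Z₁, w₁, hX₁, hZ₁, hw₁, he₁, hr₁⟩ := hp
    obtain ⟨X₂, Z₂, w₂, hX₂, hZ₂, hw₂, he₂, hr₂⟩ := hq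
    refine ⟨a • X₁ + c • X₂, a • Z₁ + c • Z₂, a • w₁ + c • w₂,
      (hX₁.smul a).add (hX₂.smul c),
      psd_add (psd_smul hZ₁ ha) (psd_smul hZ₂ hc),
      qc.add_mem (qc.smul_mem _ hw₁) (qc.smul_mem _ hw₂), ?_, ?_⟩
    · show a • p.1 + c • q.1 = _
      rw [he₁, he₂]
      module
    · show φ _ - φ X₀ < a * p.2 + c * q.2
      have hcomb := hφconv X₁ X₂ hX₁ hX₂ a c ha hc hac
      have hfx : a * φ X₀ + c * φ X₀ = φ X₀ := by rw [← add_mul, hac, one_mul]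
      have m1 := mul_lt_mul_of_pos_left hr₁ ha'
      have m2 := mul_lt_mul_of_pos_left hr₂ hc'
      linarith
  have h0DB : (0 : Matrix (Fin n) (Fin n) ℝ × ℝ) ∉ DB := by
    rintro ⟨X, Z, w, hX, hZ, hw, he, hr⟩
    have hXZsym : X - Z ∈ Msym := (hMsymMem _).mpr (hX.sub (psd_isSymm hZ))
    have hXZq : X - Z ∈ qc := by
      have : X - Z = -w := by
        have := he.symm
        simpa [eq_neg_iff_add_eq_zero] using this
      rw [this]; exact qc.neg_mem hw
    have hXZ0 : X - Z = 0 :=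
      (Submodule.mem_bot ℝ).mp (hqc.inf_eq_bot ▸ Submodule.mem_inf.mpr ⟨hXZsym, hXZq⟩)
    have hXeq : X = Z := sub_eq_zero.mp hXZ0
    have := hφmin Z hZ
    simp only [Prod.snd_zero] at hr
    rw [hXeq] at hr
    linarith
  obtain ⟨g₂, hg₂0, hg₂le⟩ := sep_lin hDBconv h0DB
  set ν : ℝ := g₂ (0, 1) with hνdef
  set hl : Matrix (Fin n) (Fin n) ℝ →ₗ[ℝ] ℝ :=
    g₂.comp (LinearMap.inl ℝ (Matrix (Fin n) (Fin n) ℝ) ℝ) with hhldef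
  have hhl : ∀ Y, hl Y = g₂ (Y, 0) := fun Y => rfl
  have hdec₂ : ∀ Y r, g₂ (Y, r) = hl Y + r * ν := by
    intro Y r
    have h1 : (Y, r) = (Y, 0) + r • ((0 : Matrix (Fin n) (Fin n) ℝ), (1 : ℝ)) := by
      simp [Prod.ext_iff]
    rw [h1, map_add, _root_.map_smul, hhl, smul_eq_mul, hνdef]
  have hineq₂ : ∀ X Z w r, X.IsSymm → Z.PosSemidef → w ∈ qc → φ X - φ X₀ < r →
      hl (X - Z + w) + r * ν ≤ 0 := by
    intro X Z w r hX hZ hw hr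
    have := hg₂le (X - Z + w, r) ⟨X, Z, w, hX, hZ, hw, rfl, hr⟩
    rwa [hdec₂] at this
  have hw0₂ : ∀ w ∈ qc, hl w = 0 := by
    intro w hw
    apply eq_zero_of_mul_le (-ν)
    intro t
    have h1 := hineq₂ X₀ X₀ (t • w) 1 hX₀symm hX₀psd (qc.smul_mem _ hw) (by simp)
    rw [sub_self, zero_add, _root_.map_smul, smul_eq_mul, one_mul] at h1
    linarith
  have hν : ν ≤ 0 := by
    have h1 := hineq₂ X₀ X₀ 0 1 hX₀symm hX₀psd qc.zero_mem (by simp)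
    rw [sub_self, zero_add, map_zero, zero_add, one_mul] at h1
    exact h1
  have hmain₂ : ∀ X Z, X.IsSymm → Z.PosSemidef →
      hl (X - Z) + (φ X - φ X₀) * ν ≤ 0 := by
    intro X Z hX hZ
    apply nonpos_of_le_mul (K := -ν) (by linarith)
    intro ε hε
    have h1 := hineq₂ X Z 0 (φ X - φ X₀ + ε) hX hZ qc.zero_mem (by linarith)
    rw [add_zero] at h1
    nlinarith
  have hν0 : ν < 0 := by
    rcases lt_or_eq_of_le hν with h | h
    · exact h
    exfalso
    apply hg₂0
    have hsym0 : ∀ S, S.IsSymm → hl S = 0 := by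
      intro S hS
      have hS' : (X₀ + S).IsSymm := hX₀symm.add hS
      have h1 := hmain₂ (X₀ + S) X₀ hS' hX₀psd
      have h2 := hmain₂ (X₀ + (-S)) X₀ (hX₀symm.add hS.neg) hX₀psd
      rw [h, mul_zero, add_zero, add_sub_cancel_left] at h1 h2
      rw [map_neg] at h2
      linarith
    apply LinearMap.ext
    rintro ⟨Y, r⟩
    rw [hdec₂, h, mul_zero, add_zero, LinearMap.zero_apply]
    have hy : Y ∈ Msym ⊔ qc := by rw [hqc.sup_eq_top]; trivial
    obtain ⟨y₁, hy₁, y₂, hy₂, rfl⟩ := Submodule.mem_sup.mp hy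
    rw [map_add, hsym0 y₁ ((hMsymMem _).mp hy₁), hw0₂ y₂ hy₂, add_zero]
  -- the two key properties of the functional hl
  have hsubgrad : ∀ X, X.IsSymm → hl (X - X₀) ≤ (φ X - φ X₀) * (-ν) := by
    intro X hX
    have h1 := hmain₂ X X₀ hX hX₀psd
    nlinarith
  have hnn : ∀ Z, Z.PosSemidef → 0 ≤ hl (Z - X₀) := by
    intro Z hZ
    have h1 := hmain₂ X₀ Z hX₀symm hZ
    rw [sub_self, zero_mul, add_zero] at h1
    have h2 : X₀ - Z = -(Z - X₀) := by abel
    rw [h2, map_neg] at h1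
    linarith
  have hlX₀ : hl X₀ = 0 := by
    have h1 := hnn 0 Matrix.PosSemidef.zero
    rw [zero_sub, map_neg] at h1
    have h2 := hnn ((2:ℝ) • X₀) (psd_smul hX₀psd (by norm_num))
    have h3 : (2:ℝ) • X₀ - X₀ = X₀ := by
      rw [two_smul]; abel
    rw [h3] at h2
    linarith
  have hlpsd : ∀ Z, Z.PosSemidef → 0 ≤ hl Z := by
    intro Z hZ
    have h1 := hnn (Z + X₀) (psd_add hZ hX₀psd)
    rwa [add_sub_cancel_right] at h1
  -- build the certificate matrix
  set P₀ : Matrix (Fin n) (Fin n) ℝ :=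
    Matrix.of fun i j => hl (Matrix.single j i 1) with hP₀def
  have htrP₀ : ∀ M, (P₀ * M).trace = hl M := trace_rep hl
  set Psym : Matrix (Fin n) (Fin n) ℝ := P₀ + P₀ᵀ with hPsymdef
  have hPsymIsSymm : Psym.IsSymm := isSymm_add_transpose_self P₀
  have htrPsym : ∀ M : Matrix (Fin n) (Fin n) ℝ, M.IsSymm → (Psym * M).trace = 2 * hl M := by
    intro M hM
    rw [hPsymdef, Matrix.add_mul, trace_add, htrP₀]
    have h1 : (P₀ᵀ * M).trace = (P₀ * M).trace := by
      rw [← trace_transpose (P₀ᵀ * M), Matrix.transpose_mul, Matrix.transpose_transpose,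
        hM, trace_mul_comm]
    rw [h1, htrP₀]
    ring
  set k : ℝ := (2 * (-ν))⁻¹ with hkdef
  have hk : 0 ≤ k := by
    rw [hkdef]
    exact inv_nonneg.mpr (by linarith)
  set P : Matrix (Fin n) (Fin n) ℝ := k • Psym with hPdef
  have htrP : ∀ M : Matrix (Fin n) (Fin n) ℝ, M.IsSymm → (P * M).trace = k * (2 * hl M) := by
    intro M hM
    rw [hPdef, Matrix.smul_mul, trace_smul, smul_eq_mul, htrPsym M hM]
  have hk2 : k * (2 * (-ν)) = 1 := by
    rw [hkdef]
    exact inv_mul_cancel₀ (by linarith)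
  refine ⟨lam, -P, ?_, ?_, ?_⟩
  · rw [neg_neg]
    refine psd_of_symm_quad (hPsymIsSymm.smul k) fun v => ?_
    rw [← trace_mul_vecMulVec, htrP _ (psd_isSymm (psd_vecMulVec v))]
    have := hlpsd _ (psd_vecMulVec v)
    positivity
  · rw [Matrix.neg_mul, trace_neg, htrP X₀ hX₀symm, hlX₀]; ring
  · intro X hX
    have h1 := hsubgrad X hX
    have htr2 : ((G + -P) * (X - X₀)).trace = (G * (X - X₀)).trace - (P * (X - X₀)).trace := by
      rw [Matrix.add_mul, trace_add, Matrix.neg_mul, trace_neg]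
      ring
    rw [htr2]
    have h2 : (P * (X - X₀)).trace = k * (2 * hl (X - X₀)) :=
      htrP _ (hX.sub hX₀symm)
    have h3 : k * (2 * hl (X - X₀)) ≤ k * (2 * ((φ X - φ X₀) * (-ν))) := by
      apply mul_le_mul_of_nonneg_left _ hk
      linarith
    have h4 : k * (2 * ((φ X - φ X₀) * (-ν))) = φ X - φ X₀ := by
      have : k * (2 * ((φ X - φ X₀) * (-ν))) = (φ X - φ X₀) * (k * (2 * (-ν))) := by ring
      rw [this, hk2, mul_one]
    have h5 : φ X = f X + (G * (X - X₀)).trace := rfl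
    have h6 : φ X₀ = f X₀ := hφX₀
    rw [ge_iff_le]
    have h7 : (P * (X - X₀)).trace ≤ φ X - φ X₀ := by
      rw [h2]
      linarith
    rw [h5, h6] at h7
    linarith
end

section
/- Let A₁,…,A_m be real symmetric n×n matrices, x₀ ∈ ℝⁿ, X₀ = x₀x₀ᵀ, bᵢ = ⟨X₀, Aᵢ⟩, and S = {Σᵢ λᵢAᵢ + Q : λ ∈ ℝ^m, Q ⪯ 0, ⟨Q, X₀⟩ = 0}. Suppose S fails the completeness condition at X₀, i.e. there exist λ ∈ ℝ^m with A = Σᵢ λᵢAᵢ ⪰ 0, ⟨A, X₀⟩ = 0, a vector y ∈ ℝⁿ, and q in the range of A such that yqᵀ + qyᵀ ∉ S. Then there exists a symmetric matrix C (one may take C = −(yqᵀ + qyᵀ)) such that: X₀ minimizes the linear objective X ↦ ⟨C, X⟩ over the feasible set {X ⪰ 0, ⟨X, Aᵢ⟩ = bᵢ ∀i}, yet no dual certificate exists at X₀, i.e. there are no λ ∈ ℝ^m and symmetric Q with Q ⪯ 0, ⟨Q, X₀⟩ = 0, and Σᵢ λᵢAᵢ + Q = −C. -/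
open Matrix

lemma my_trace_conj_self_eq_zero {k : ℕ} {M : Matrix (Fin k) (Fin k) ℝ}
    (h : (Mᴴ * M).trace = 0) : M = 0 := by
  have h' : ∑ i, ∑ j, (M j i) ^ 2 = 0 := by
    simpa [Matrix.trace, Matrix.mul_apply, Matrix.diag, Matrix.conjTranspose_apply, sq] using h
  ext i j
  have h1 := (Finset.sum_eq_zero_iff_of_nonneg (fun i _ =>
    Finset.sum_nonneg fun j _ => sq_nonneg (M j i))).mp h' j (Finset.mem_univ _)
  have h2 := (Finset.sum_eq_zero_iff_of_nonneg (fun l _ => sq_nonneg (M l j))).mp h1 i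
    (Finset.mem_univ _)
  simpa using (pow_eq_zero_iff two_ne_zero).mp h2

open scoped MatrixOrder in
lemma my_psd_eq {k : ℕ} {P : Matrix (Fin k) (Fin k) ℝ} (hP : P.PosSemidef) :
    ∃ B : Matrix (Fin k) (Fin k) ℝ, P = Bᴴ * B := by
  have h0 : (0 : Matrix (Fin k) (Fin k) ℝ) ≤ P := nonneg_iff_posSemidef.mpr hP
  refine ⟨CFC.sqrt P, ?_⟩
  have hs : IsSelfAdjoint (CFC.sqrt P) := IsSelfAdjoint.of_nonneg (CFC.sqrt_nonneg P)
  rw [show (CFC.sqrt P)ᴴ = CFC.sqrt P from hs, CFC.sqrt_mul_sqrt_self P h0]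

lemma my_mul_eq_zero {k : ℕ} {P Q : Matrix (Fin k) (Fin k) ℝ}
    (hP : P.PosSemidef) (hQ : Q.PosSemidef) (h : (P * Q).trace = 0) : P * Q = 0 := by
  obtain ⟨B, rfl⟩ := my_psd_eq hP
  obtain ⟨D, rfl⟩ := my_psd_eq hQ
  have key : ((B * Dᴴ)ᴴ * (B * Dᴴ)).trace = 0 := by
    rw [conjTranspose_mul, conjTranspose_conjTranspose]
    calc (D * Bᴴ * (B * Dᴴ)).trace = ((D * Bᴴ * B) * Dᴴ).trace := by rw [← mul_assoc]
    _ = (Dᴴ * (D * Bᴴ * B)).trace := by rw [trace_mul_comm]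
    _ = ((Dᴴ * D) * (Bᴴ * B)).trace := by simp only [mul_assoc]
    _ = ((Bᴴ * B) * (Dᴴ * D)).trace := trace_mul_comm _ _
    _ = 0 := h
  have hz : B * Dᴴ = 0 := my_trace_conj_self_eq_zero key
  calc Bᴴ * B * (Dᴴ * D) = Bᴴ * (B * Dᴴ) * D := by noncomm_ring
  _ = 0 := by rw [hz, mul_zero, zero_mul]

lemma my_trace_vecMulVec_mul {k : ℕ} (w u : Fin k → ℝ) (X : Matrix (Fin k) (Fin k) ℝ) :
    ((vecMulVec w u) * X).trace = u ⬝ᵥ (X *ᵥ w) := by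
  simp only [Matrix.trace, Matrix.diag, Matrix.mul_apply, Matrix.vecMulVec_apply,
    dotProduct, Matrix.mulVec, Finset.mul_sum]
  rw [Finset.sum_comm]
  exact Finset.sum_congr rfl fun j _ => Finset.sum_congr rfl fun i _ => by ring

/-- **Theorem 5 (weak necessity of completeness).** If `S` fails the completeness
condition at `X₀ = x₀x₀ᵀ`, then there is a (linear, hence convex) objective
`X ↦ ⟨C, X⟩` for which `X₀` is a minimizer over the feasible set but no dual
certificate exists at `X₀`. -/
theorem no_dual_certificate_of_not_complete {n m : ℕ}
    (A : Fin m → Matrix (Fin n) (Fin n) ℝ)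
    (x₀ : Fin n → ℝ) (X₀ : Matrix (Fin n) (Fin n) ℝ) (b : Fin m → ℝ)
    (S : Set (Matrix (Fin n) (Fin n) ℝ))
    (hX₀ : X₀ = vecMulVec x₀ x₀)
    (hb : ∀ i, b i = (X₀ * A i).trace)
    (hA : ∀ i, (A i).IsSymm)
    (hS : S = {Y : Matrix (Fin n) (Fin n) ℝ |
      ∃ (lam : Fin m → ℝ) (Q : Matrix (Fin n) (Fin n) ℝ),
        (-Q).PosSemidef ∧ (Q * X₀).trace = 0 ∧ Y = (∑ i, lam i • A i) + Q})
    (hnotcomplete : ∃ (lam : Fin m → ℝ) (y q : Fin n → ℝ),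
      (∑ i, lam i • A i).PosSemidef ∧ ((∑ i, lam i • A i) * X₀).trace = 0 ∧
      (∃ v, (∑ i, lam i • A i).mulVec v = q) ∧
      vecMulVec y q + vecMulVec q y ∉ S) :
    ∃ C : Matrix (Fin n) (Fin n) ℝ, C.IsSymm ∧
      (∀ X : Matrix (Fin n) (Fin n) ℝ, X.PosSemidef →
        (∀ i, (X * A i).trace = b i) → (C * X₀).trace ≤ (C * X).trace) ∧
      ¬ ∃ (lam : Fin m → ℝ) (Q : Matrix (Fin n) (Fin n) ℝ),
        (-Q).PosSemidef ∧ (Q * X₀).trace = 0 ∧ (∑ i, lam i • A i) + Q = -C := by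
  obtain ⟨lam, y, q, hMpsd, htr0, ⟨v, hv⟩, hnot⟩ := hnotcomplete
  set M : Matrix (Fin n) (Fin n) ℝ := ∑ i, lam i • A i with hM
  refine ⟨-(vecMulVec y q + vecMulVec q y), ?_, ?_, ?_⟩
  · -- symmetry
    have h1 : (vecMulVec y q)ᵀ = vecMulVec q y := by
      ext i j; simp [vecMulVec_apply, mul_comm]
    have h2 : (vecMulVec q y)ᵀ = vecMulVec y q := by
      ext i j; simp [vecMulVec_apply, mul_comm]
    show (-(vecMulVec y q + vecMulVec q y))ᵀ = _
    rw [transpose_neg, transpose_add, h1, h2, add_comm]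
  · -- minimizer
    have main : ∀ X : Matrix (Fin n) (Fin n) ℝ, X.PosSemidef → (M * X).trace = 0 →
        ((vecMulVec y q + vecMulVec q y) * X).trace = 0 := by
      intro X hX h0
      have hMX : M * X = 0 := my_mul_eq_zero hMpsd hX h0
      have hXM : X * M = 0 := by
        rw [← hX.1, ← hMpsd.1, ← conjTranspose_mul, hMX, conjTranspose_zero]
      have hXs : Xᵀ = X := hX.1
      have hXq : X *ᵥ q = 0 := by
        rw [← hv, mulVec_mulVec, hXM, zero_mulVec]
      have hqX : q ᵥ* X = 0 := by
        calc q ᵥ* X = q ᵥ* Xᵀ := by rw [hXs]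
        _ = X *ᵥ q := vecMul_transpose _ _
        _ = 0 := hXq
      rw [add_mul, trace_add, my_trace_vecMulVec_mul, my_trace_vecMulVec_mul,
        hXq, dotProduct_zero, dotProduct_mulVec, hqX, zero_dotProduct, add_zero]
    have hX₀psd : X₀.PosSemidef := by
      rw [hX₀, vecMulVec_eq (Fin 1)]
      have hc : replicateCol (Fin 1) x₀ = (replicateRow (Fin 1) x₀)ᴴ := by
        rw [conjTranspose_replicateRow, star_trivial]
      rw [hc]
      exact posSemidef_conjTranspose_mul_self _
    intro X hXpsd hfeas
    have htrMX : (M * X).trace = 0 := by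
      have : (M * X).trace = (M * X₀).trace := by
        rw [hM, Finset.sum_mul, Finset.sum_mul, trace_sum, trace_sum]
        refine Finset.sum_congr rfl fun i _ => ?_
        rw [smul_mul_assoc, smul_mul_assoc, trace_smul, trace_smul,
          trace_mul_comm (A i) X, hfeas i, hb i, trace_mul_comm]
      rw [this]; exact htr0
    have e1 := main X hXpsd htrMX
    have e2 := main X₀ hX₀psd htr0
    rw [neg_mul, neg_mul, trace_neg, trace_neg, e1, e2]
  · -- no dual certificate
    rintro ⟨lam', Q, hQ, hQtr, heq⟩
    exact hnot (by rw [hS]; exact ⟨lam', Q, hQ, hQtr, by rw [heq, neg_neg]⟩)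
end

section
/- Let A₁,…,A_m be real symmetric n×n matrices, x₀ ∈ ℝⁿ, X₀ = x₀x₀ᵀ, bᵢ = ⟨X₀, Aᵢ⟩, and S = {Σᵢ λᵢAᵢ + Q : λ ∈ ℝ^m, Q ⪯ 0, ⟨Q, X₀⟩ = 0}. If S fails the completeness condition at X₀ — i.e. there exist λ with A = Σᵢ λᵢAᵢ ⪰ 0, ⟨A, X₀⟩ = 0, y ∈ ℝⁿ, and q in the range of A such that yqᵀ + qyᵀ ∉ S — then the normal cone of the feasible set at X₀ strictly contains S: the matrix Y = yqᵀ + qyᵀ satisfies ⟨Y, X − X₀⟩ ≤ 0 for every symmetric X with X ⪰ 0 and ⟨X, Aᵢ⟩ = bᵢ for all i, yet Y ∉ S. -/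
open Matrix

/-- Over ℝ, `trace (Mᴴ * M) = 0` implies `M = 0`. -/
lemma trace_conjTranspose_mul_self_eq_zero_real {k l : Type*} [Fintype k] [Fintype l]
    {M : Matrix k l ℝ} (h : (Mᴴ * M).trace = 0) : M = 0 := by
  have h' : ∑ j : l, ∑ i : k, M i j * M i j = 0 := by
    simpa [Matrix.trace, Matrix.diag, Matrix.mul_apply, Matrix.conjTranspose_apply] using h
  ext i j
  have h1 := (Finset.sum_eq_zero_iff_of_nonneg (fun j _ => Finset.sum_nonneg
    (fun i _ => mul_self_nonneg (M i j)))).mp h' j (Finset.mem_univ j)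
  have h2 := (Finset.sum_eq_zero_iff_of_nonneg
    (fun i _ => mul_self_nonneg (M i j))).mp h1 i (Finset.mem_univ i)
  simpa using mul_self_eq_zero.mp h2

/-- If `A, X` are PSD real matrices with `trace (A * X) = 0`, then `A * X = 0`. -/
lemma psd_mul_eq_zero_of_trace {n : ℕ} {A X : Matrix (Fin n) (Fin n) ℝ}
    (hA : A.PosSemidef) (hX : X.PosSemidef) (h : (A * X).trace = 0) : A * X = 0 := by
  open scoped MatrixOrder in
  obtain ⟨C, hC⟩ := CStarAlgebra.nonneg_iff_eq_star_mul_self.mp hA.nonneg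
  open scoped MatrixOrder in
  obtain ⟨B, hB⟩ := CStarAlgebra.nonneg_iff_eq_star_mul_self.mp hX.nonneg
  rw [Matrix.star_eq_conjTranspose] at hC hB
  have key : C * Bᴴ = 0 := by
    have this1 : ((C * Bᴴ)ᴴ * (C * Bᴴ)).trace = (A * X).trace := by
      rw [Matrix.conjTranspose_mul, Matrix.conjTranspose_conjTranspose, hC, hB]
      rw [show B * Cᴴ * (C * Bᴴ) = B * (Cᴴ * C * Bᴴ) by noncomm_ring,
        Matrix.trace_mul_comm]
      noncomm_ring
    exact trace_conjTranspose_mul_self_eq_zero_real (this1.trans h)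
  calc A * X = Cᴴ * (C * Bᴴ) * B := by rw [hC, hB]; noncomm_ring
  _ = 0 := by rw [key]; simp

/-- Trace of `vecMulVec a c * M` equals `c ⬝ᵥ M *ᵥ a`. -/
lemma trace_vecMulVec_mul {n : ℕ} (a c : Fin n → ℝ) (M : Matrix (Fin n) (Fin n) ℝ) :
    (vecMulVec a c * M).trace = c ⬝ᵥ M *ᵥ a := by
  simp only [Matrix.trace, Matrix.diag, Matrix.mul_apply, Matrix.vecMulVec_apply,
    dotProduct, Matrix.mulVec, Finset.mul_sum]
  rw [Finset.sum_comm]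
  congr 1; ext j; congr 1; ext i; ring

/-- If `N * M = 0` with `N, M` symmetric, then `(y(Nv)ᵀ + (Nv)yᵀ) M` has zero trace. -/
lemma aux_trace_zero {n : ℕ} {N M : Matrix (Fin n) (Fin n) ℝ}
    (hNs : Nᵀ = N) (hMs : Mᵀ = M) (v y : Fin n → ℝ) (h0 : N * M = 0) :
    ((vecMulVec y (N *ᵥ v) + vecMulVec (N *ᵥ v) y) * M).trace = 0 := by
  have hMN : M * N = 0 := by
    have : (N * M)ᵀ = M * N := by rw [Matrix.transpose_mul, hNs, hMs]
    rw [← this, h0, Matrix.transpose_zero]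
  rw [Matrix.add_mul, Matrix.trace_add, trace_vecMulVec_mul, trace_vecMulVec_mul]
  have e1 : (N *ᵥ v) ⬝ᵥ M *ᵥ y = 0 := by
    rw [← hNs, Matrix.mulVec_transpose, ← Matrix.dotProduct_mulVec,
      Matrix.mulVec_mulVec, h0]
    simp
  have e2 : y ⬝ᵥ M *ᵥ (N *ᵥ v) = 0 := by
    rw [Matrix.mulVec_mulVec, hMN]
    simp
  rw [e1, e2, add_zero]

/-- **Lemma (subgradient additivity, failure direction).** If `S` fails the
completeness condition at `X₀ = x₀x₀ᵀ` via witnesses `λ, y, q`, then the matrix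
`Y = yqᵀ + qyᵀ` lies in the normal cone of the feasible set at `X₀` even though
`Y ∉ S`: the normal cone strictly contains `S`. -/
theorem normal_cone_strictly_contains_of_not_complete {n m : ℕ}
    (A : Fin m → Matrix (Fin n) (Fin n) ℝ)
    (x₀ : Fin n → ℝ) (X₀ : Matrix (Fin n) (Fin n) ℝ) (b : Fin m → ℝ)
    (S : Set (Matrix (Fin n) (Fin n) ℝ))
    (hX₀ : X₀ = vecMulVec x₀ x₀)
    (hb : ∀ i, b i = (X₀ * A i).trace)
    (hA : ∀ i, (A i).IsSymm)
    (hS : S = {Y : Matrix (Fin n) (Fin n) ℝ |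
      ∃ (lam : Fin m → ℝ) (Q : Matrix (Fin n) (Fin n) ℝ),
        (-Q).PosSemidef ∧ (Q * X₀).trace = 0 ∧ Y = (∑ i, lam i • A i) + Q})
    (lam : Fin m → ℝ) (y q : Fin n → ℝ)
    (hpsd : (∑ i, lam i • A i).PosSemidef)
    (horth : ((∑ i, lam i • A i) * X₀).trace = 0)
    (hq : ∃ v, (∑ i, lam i • A i).mulVec v = q)
    (hnotS : vecMulVec y q + vecMulVec q y ∉ S) :
    ∀ X : Matrix (Fin n) (Fin n) ℝ, X.PosSemidef → (∀ i, (X * A i).trace = b i) →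
      ((vecMulVec y q + vecMulVec q y) * (X - X₀)).trace ≤ 0 := by
  intro X hX hfeas
  set N : Matrix (Fin n) (Fin n) ℝ := ∑ i, lam i • A i with hN
  obtain ⟨v, hv⟩ := hq
  have hNs : Nᵀ = N := by
    rw [hN, Matrix.transpose_sum]
    exact Finset.sum_congr rfl fun i _ => by rw [Matrix.transpose_smul, hA i]
  have hXs : Xᵀ = X := by
    rw [← Matrix.conjTranspose_eq_transpose_of_trivial]
    exact hX.isHermitian
  have hX₀s : X₀ᵀ = X₀ := by
    rw [hX₀]
    ext i j
    simp [Matrix.vecMulVec_apply, mul_comm]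
  have hX₀psd : X₀.PosSemidef := by
    rw [hX₀, Matrix.vecMulVec_eq (Fin 1)]
    have : Matrix.replicateCol (Fin 1) x₀ = (Matrix.replicateRow (Fin 1) x₀)ᴴ := by
      ext i j; simp
    rw [this]
    exact Matrix.posSemidef_conjTranspose_mul_self _
  have hNX₀ : N * X₀ = 0 := psd_mul_eq_zero_of_trace hpsd hX₀psd horth
  have hNXtr : (N * X).trace = 0 := by
    have h1 : (N * X).trace = ∑ i, lam i * (X * A i).trace := by
      rw [hN, Finset.sum_mul, Matrix.trace_sum]
      refine Finset.sum_congr rfl fun i _ => ?_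
      rw [Matrix.smul_mul, Matrix.trace_smul, Matrix.trace_mul_comm]
      simp
    have h2 : ∑ i, lam i * (X * A i).trace = (N * X₀).trace := by
      simp only [hfeas, hb]
      rw [show (N * X₀).trace = (X₀ * N).trace from Matrix.trace_mul_comm N X₀, hN,
        Finset.mul_sum, Matrix.trace_sum]
      refine Finset.sum_congr rfl fun i _ => ?_
      rw [Matrix.mul_smul, Matrix.trace_smul]
      simp
    rw [h1, h2, hNX₀, Matrix.trace_zero]
  have hNX : N * X = 0 := psd_mul_eq_zero_of_trace hpsd hX hNXtr
  rw [Matrix.mul_sub, Matrix.trace_sub, ← hv,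
    aux_trace_zero hNs hXs v y hNX, aux_trace_zero hNs hX₀s v y hNX₀]
  simp
end

section
/- Let x₀ ∈ ℝⁿ, X₀ = x₀x₀ᵀ, and let Λ be a real symmetric n×n matrix. If X₀ + δΛ ⪰ 0 for some δ > 0, then: (a) the compression of Λ to the orthogonal complement of x₀ is positive semidefinite, i.e. vᵀΛv ≥ 0 for every v ∈ ℝⁿ with vᵀx₀ = 0; and (b) for every q ∈ ℝⁿ with qᵀx₀ = 0 and ⟨Λ, qqᵀ⟩ = 0, one has ⟨Λ, x₀qᵀ + qx₀ᵀ⟩ = 0. -/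
open Matrix

/-- **Lemma 4, necessity direction.** If `x₀x₀ᵀ + δΛ ⪰ 0` for some `δ > 0`, then
(a) the compression of `Λ` to `{x₀}ᗮ` is positive semidefinite, and (b) any `q ⊥ x₀`
with `⟨Λ, qqᵀ⟩ = 0` satisfies `⟨Λ, x₀qᵀ + qx₀ᵀ⟩ = 0`. -/
theorem psd_perturbation_necessary {n : ℕ}
    (x₀ : Fin n → ℝ) (X₀ Λ : Matrix (Fin n) (Fin n) ℝ)
    (hX₀ : X₀ = vecMulVec x₀ x₀)
    (hΛ : Λ.IsSymm)
    (hpert : ∃ δ : ℝ, 0 < δ ∧ (X₀ + δ • Λ).PosSemidef) :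
    (∀ v : Fin n → ℝ, v ⬝ᵥ x₀ = 0 → 0 ≤ v ⬝ᵥ Λ.mulVec v) ∧
    (∀ q : Fin n → ℝ, q ⬝ᵥ x₀ = 0 → (Λ * vecMulVec q q).trace = 0 →
      (Λ * (vecMulVec x₀ q + vecMulVec q x₀)).trace = 0) := by
  obtain ⟨δ, hδ, hpsd⟩ := hpert
  have htr : ∀ a b : Fin n → ℝ, (Λ * vecMulVec a b).trace = b ⬝ᵥ Λ.mulVec a := by
    intro a b
    simp only [Matrix.trace, Matrix.diag, Matrix.mul_apply, vecMulVec_apply, dotProduct,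
      mulVec, Finset.mul_sum]
    exact Finset.sum_congr rfl fun i _ => Finset.sum_congr rfl fun j _ => by ring
  have hvmv : ∀ v : Fin n → ℝ, (vecMulVec x₀ x₀) *ᵥ v = (x₀ ⬝ᵥ v) • x₀ := by
    intro v
    ext i
    simp [vecMulVec_apply, mulVec, dotProduct, Finset.mul_sum, mul_comm, mul_assoc,
      mul_left_comm]
  have key : ∀ v : Fin n → ℝ, 0 ≤ (v ⬝ᵥ x₀) * (x₀ ⬝ᵥ v) + δ * (v ⬝ᵥ Λ.mulVec v) := by
    intro v
    have h := (Matrix.posSemidef_iff_dotProduct_mulVec.mp hpsd).2 v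
    rw [hX₀, Matrix.add_mulVec, Matrix.smul_mulVec, dotProduct_add, hvmv,
      dotProduct_smul, dotProduct_smul, smul_eq_mul, smul_eq_mul, star_trivial] at h
    linarith [h]
  have hsymmdot : ∀ a b : Fin n → ℝ, a ⬝ᵥ Λ.mulVec b = b ⬝ᵥ Λ.mulVec a := by
    intro a b
    rw [dotProduct_mulVec, ← mulVec_transpose, hΛ.eq, dotProduct_comm]
  constructor
  · intro v hv
    have h := key v
    rw [hv] at h
    nlinarith
  · intro q hq hqtr
    rw [htr] at hqtr
    rw [Matrix.mul_add, Matrix.trace_add, htr, htr]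
    have hbsymm : x₀ ⬝ᵥ Λ.mulVec q = q ⬝ᵥ Λ.mulVec x₀ := hsymmdot x₀ q
    set b := q ⬝ᵥ Λ.mulVec x₀ with hb
    have hb0 : b = 0 := by
      by_contra hbne
      set s := x₀ ⬝ᵥ x₀ with hs
      set a := x₀ ⬝ᵥ Λ.mulVec x₀ with ha
      have key' : ∀ t : ℝ, 0 ≤ s * s + δ * (a + 2 * t * b) := by
        intro t
        have h := key (x₀ + t • q)
        have hqx : q ⬝ᵥ x₀ = 0 := hq
        have hxq : x₀ ⬝ᵥ q = 0 := by rw [dotProduct_comm]; exact hq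
        simp only [dotProduct_add, add_dotProduct, mulVec_add, mulVec_smul,
          dotProduct_smul, smul_dotProduct, smul_eq_mul, hqx, hxq, hqtr, hbsymm,
          mul_zero, add_zero, zero_add] at h
        calc (0:ℝ) ≤ _ := h
        _ = s * s + δ * (a + 2 * t * b) := by ring
      have := key' (-(s * s + δ * a + 1) / (2 * δ * b))
      have h2δb : 2 * δ * b ≠ 0 := by positivity
      rw [show s * s + δ * (a + 2 * (-(s * s + δ * a + 1) / (2 * δ * b)) * b)
          = -1 by field_simp; ring] at this
      linarith
    rw [hbsymm, hb0]
    simp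
end

section
/- Let n = 2, X₀ = e₁e₁ᵀ, A₁ = e₂e₂ᵀ (the matrix with 1 in entry (2,2) and zeros elsewhere), and A₂ the all-ones 2×2 matrix, with constraints ⟨X, A₁⟩ = 0 and ⟨X, A₂⟩ = 1 and objective f(X) = ½‖X‖_F². Then there is no dual certificate at X₀: there exist no λ₁, λ₂ ∈ ℝ and symmetric 2×2 matrix Q with Q ⪯ 0, ⟨Q, X₀⟩ = 0, and λ₁A₁ + λ₂A₂ + Q = −X₀. (Here −X₀ is the unique element of −∂f(X₀), since ∂f(X₀) = {X₀} for f(X) = ½‖X‖_F².) -/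
open Matrix

/-- **Example 1.** For `X₀ = e₁e₁ᵀ`, `A₁ = e₂e₂ᵀ`, `A₂` the all-ones matrix, and the
objective `f(X) = ½‖X‖_F²` (whose subdifferential at `X₀` is `{X₀}`), there is no
dual certificate at `X₀`: no `(λ₁, λ₂, Q)` with `Q ⪯ 0`, `⟨Q, X₀⟩ = 0`, and
`λ₁A₁ + λ₂A₂ + Q = −X₀`. -/
theorem no_dual_certificate_example
    (X₀ A₁ A₂ : Matrix (Fin 2) (Fin 2) ℝ)
    (hX₀ : X₀ = !![1, 0; 0, 0])
    (hA₁ : A₁ = !![0, 0; 0, 1])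
    (hA₂ : A₂ = !![1, 1; 1, 1]) :
    ¬ ∃ (l₁ l₂ : ℝ) (Q : Matrix (Fin 2) (Fin 2) ℝ),
      (-Q).PosSemidef ∧ (Q * X₀).trace = 0 ∧ l₁ • A₁ + l₂ • A₂ + Q = -X₀ := by
  rintro ⟨l₁, l₂, Q, hPSD, htr, heq⟩
  subst hX₀ hA₁ hA₂
  have hQ : Q = !![-1 - l₂, -l₂; -l₂, -l₁ - l₂] := by
    have := heq
    ext i j
    have h := congrFun (congrFun heq i) j
    fin_cases i <;> fin_cases j <;>
      simp [Matrix.add_apply, Matrix.smul_apply] at h ⊢ <;> linarith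
  subst hQ
  have h2 : (-1 : ℝ) - l₂ = 0 := by
    simpa [Matrix.trace_fin_two, Matrix.mul_apply, Fin.sum_univ_two] using htr
  have hl₂ : l₂ = -1 := by linarith
  subst hl₂
  have := hPSD.dotProduct_mulVec_nonneg ![l₁ / 2, 1]
  simp [Matrix.mulVec, dotProduct, Fin.sum_univ_two] at this
  nlinarith [this]
end
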